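/- arXiv:2509.24013 — 4 statements merged into one kernel-verified Lean document; each statement's English description precedes it below -/
import Mathlib

section
/- Let G and H be vertex-disjoint finite simple graphs with α(H) ≤ α(G). Then for each a ∈ {1, …, α(G)}, the w-function of the join satisfies: w(a, H ∨ G) = w(a,H) + w(a,G) if a ≤ α(H), and w(a, H ∨ G) = |V(H)| + w(a,G) if α(H) ≤ a ≤ α(G). -/
open Classical Finset

variable {V : Type*}

/-- Independence number of the subgraph of `G` induced on `D`. -/
noncomputable def indepNumOn (G : SimpleGraph V) [Fintype V] (D : Finset V) : ℕ :=
  (D.powerset.filter (fun s => ∀ x ∈ s, ∀ y ∈ s, x ≠ y → ¬ G.Adj x y)).sup Finset.card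

noncomputable def indepNum (G : SimpleGraph V) [Fintype V] : ℕ := indepNumOn G Finset.univ

noncomputable def cliqueNum (G : SimpleGraph V) [Fintype V] : ℕ :=
  (Finset.univ.powerset.filter
    (fun s : Finset V => ∀ x ∈ s, ∀ y ∈ s, x ≠ y → G.Adj x y)).sup Finset.card

/-- Hall ratio of `G`: max over nonempty (induced) subgraphs of |V(H)|/α(H). -/
noncomputable def hallRatio (G : SimpleGraph V) [Fintype V] : ℚ :=
  if h : (Finset.univ.powerset.filter (fun s : Finset V => s.Nonempty)).Nonempty then
    (Finset.univ.powerset.filter (fun s : Finset V => s.Nonempty)).sup' h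
      (fun D => (D.card : ℚ) / (indepNumOn G D : ℚ))
  else 0

/-- `wfun G a` : order of the largest induced subgraph of `G` with independence number `a`. -/
noncomputable def wfun (G : SimpleGraph V) [Fintype V] (a : ℕ) : ℕ :=
  (Finset.univ.powerset.filter (fun s : Finset V => indepNumOn G s = a)).sup Finset.card

/-- Join of two vertex-disjoint graphs. -/
def joinG {α β : Type*} (G : SimpleGraph α) (H : SimpleGraph β) : SimpleGraph (α ⊕ β) where
  Adj x y :=
    match x, y with
    | Sum.inl a, Sum.inl b => G.Adj a b
    | Sum.inr a, Sum.inr b => H.Adj a b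
    | Sum.inl _, Sum.inr _ => True
    | Sum.inr _, Sum.inl _ => True
  symm := by
    constructor
    rintro (a | a) (b | b) h <;> try trivial
    · exact h.symm
    · exact h.symm
  loopless := by
    constructor
    rintro (a | a) h
    · exact G.irrefl h
    · exact H.irrefl h

/-- `G` is `f`-choosable. -/
def Choosable (G : SimpleGraph V) (f : V → ℕ) : Prop :=
  ∀ L : V → Finset ℕ, (∀ v, (L v).card = f v) →
    ∃ c : V → ℕ, (∀ v, c v ∈ L v) ∧ ∀ u v, G.Adj u v → c u ≠ c v

/-- List chromatic number. -/
noncomputable def listChromNum (G : SimpleGraph V) : ℕ :=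
  sInf {k | Choosable G (fun _ => k)}

/-- Chromatic number (as a natural number). -/
noncomputable def chromNum (G : SimpleGraph V) : ℕ :=
  sInf {n | G.Colorable n}

/-- `G` is `(k, ε)`-flexible: for every `k`-assignment `L` and every request `r`
with nonempty domain `D`, some proper `L`-coloring satisfies at least `ε|D|` requests. -/
def FlexSat (G : SimpleGraph V) (k : ℕ) (ε : ℚ) : Prop :=
  ∀ L : V → Finset ℕ, (∀ v, (L v).card = k) →
    ∀ D : Finset V, D.Nonempty → ∀ r : V → ℕ, (∀ v ∈ D, r v ∈ L v) →
      ∃ c : V → ℕ, (∀ v, c v ∈ L v) ∧ (∀ u v, G.Adj u v → c u ≠ c v) ∧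
        ε * (D.card : ℚ) ≤ ((D.filter (fun v => c v = r v)).card : ℚ)

/-- List flexibility number. -/
noncomputable def listFlexNum (G : SimpleGraph V) [Fintype V] : ℕ :=
  sInf {k | FlexSat G k (1 / hallRatio G)}

section aux
variable [Fintype V] (G : SimpleGraph V)

lemma card_le_indepNumOn {D s : Finset V} (hsub : s ⊆ D)
    (hi : ∀ x ∈ s, ∀ y ∈ s, x ≠ y → ¬ G.Adj x y) : s.card ≤ indepNumOn G D :=
  Finset.le_sup (Finset.mem_filter.2 ⟨Finset.mem_powerset.2 hsub, hi⟩)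

lemma exists_indep_eq (D : Finset V) : ∃ s, s ⊆ D ∧
    (∀ x ∈ s, ∀ y ∈ s, x ≠ y → ¬ G.Adj x y) ∧ s.card = indepNumOn G D := by
  have hne : (D.powerset.filter (fun s => ∀ x ∈ s, ∀ y ∈ s, x ≠ y → ¬ G.Adj x y)).Nonempty :=
    ⟨∅, by simp⟩
  obtain ⟨s, hs, hcard⟩ := Finset.exists_mem_eq_sup _ hne Finset.card
  rw [Finset.mem_filter, Finset.mem_powerset] at hs
  exact ⟨s, hs.1, hs.2, hcard.symm⟩

lemma indepNumOn_mono {D E : Finset V} (h : D ⊆ E) : indepNumOn G D ≤ indepNumOn G E := by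
  obtain ⟨s, hsD, hi, hc⟩ := exists_indep_eq G D
  rw [← hc]
  exact card_le_indepNumOn G (hsD.trans h) hi

lemma indepNumOn_le_card (D : Finset V) : indepNumOn G D ≤ D.card :=
  Finset.sup_le fun s hs =>
    Finset.card_le_card (Finset.mem_powerset.1 (Finset.mem_filter.1 hs).1)

lemma indepNumOn_insert_le (v : V) (D : Finset V) :
    indepNumOn G (insert v D) ≤ indepNumOn G D + 1 := by
  obtain ⟨s, hsD, hi, hc⟩ := exists_indep_eq G (insert v D)
  rw [← hc]
  have h1 : s.erase v ⊆ D := by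
    intro x hx
    rcases Finset.mem_insert.1 (hsD (Finset.mem_of_mem_erase hx)) with h | h
    · exact absurd h (Finset.ne_of_mem_erase hx)
    · exact h
  have h2 : (s.erase v).card ≤ indepNumOn G D :=
    card_le_indepNumOn G h1 (fun x hx y hy =>
      hi x (Finset.mem_of_mem_erase hx) y (Finset.mem_of_mem_erase hy))
  have h3 : s ⊆ insert v (s.erase v) := by
    intro x hx
    by_cases hxv : x = v
    · simp [hxv]
    · exact Finset.mem_insert_of_mem (Finset.mem_erase.2 ⟨hxv, hx⟩)
  calc s.card ≤ (insert v (s.erase v)).card := Finset.card_le_card h3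
    _ ≤ (s.erase v).card + 1 := Finset.card_insert_le _ _
    _ ≤ indepNumOn G D + 1 := by omega

lemma exists_superset_indep {a : ℕ} (h2 : a ≤ indepNum G) :
    ∀ n (S : Finset V), (Finset.univ \ S).card = n → indepNumOn G S ≤ a →
    ∃ T, S ⊆ T ∧ indepNumOn G T = a := by
  intro n
  induction n with
  | zero =>
    intro S hn h1
    have hSu : Finset.univ ⊆ S := Finset.sdiff_eq_empty_iff_subset.1 (Finset.card_eq_zero.1 hn)
    refine ⟨S, subset_rfl, le_antisymm h1 ?_⟩
    exact le_trans h2 (indepNumOn_mono G hSu)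
  | succ n ih =>
    intro S hn h1
    by_cases he : indepNumOn G S = a
    · exact ⟨S, subset_rfl, he⟩
    have hlt : indepNumOn G S < a := lt_of_le_of_ne h1 he
    have hne : (Finset.univ \ S).Nonempty := by
      rw [← Finset.card_pos, hn]; omega
    obtain ⟨v, hv⟩ := hne
    have hvS : v ∉ S := (Finset.mem_sdiff.1 hv).2
    have hcard : (Finset.univ \ insert v S).card = n := by
      rw [Finset.card_sdiff_of_subset (Finset.subset_univ _)] at hn ⊢
      rw [Finset.card_insert_of_notMem hvS]
      have := Finset.card_le_univ (insert v S)
      rw [Finset.card_insert_of_notMem hvS] at this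
      rw [Finset.card_univ] at *
      omega
    obtain ⟨T, hT1, hT2⟩ := ih (insert v S) hcard
      (le_trans (indepNumOn_insert_le G v S) (by omega))
    exact ⟨T, (Finset.subset_insert v S).trans hT1, hT2⟩

end aux


section aux2
variable [Fintype V] (G : SimpleGraph V)

lemma card_le_wfun {a : ℕ} (h2 : a ≤ indepNum G) {S : Finset V}
    (h1 : indepNumOn G S ≤ a) : S.card ≤ wfun G a := by
  obtain ⟨T, hST, hT⟩ := exists_superset_indep G h2 _ S rfl h1
  calc S.card ≤ T.card := Finset.card_le_card hST
    _ ≤ wfun G a := Finset.le_sup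
        (Finset.mem_filter.2 ⟨Finset.mem_powerset.2 (Finset.subset_univ T), hT⟩)

lemma exists_wfun {a : ℕ} (h : a ≤ indepNum G) :
    ∃ S : Finset V, indepNumOn G S = a ∧ S.card = wfun G a := by
  have h0 : indepNumOn G (∅ : Finset V) ≤ a :=
    le_trans (indepNumOn_le_card G ∅) (by simp)
  obtain ⟨T, -, hT⟩ := exists_superset_indep G h _ (∅ : Finset V) rfl h0
  have hne : (Finset.univ.powerset.filter (fun s : Finset V => indepNumOn G s = a)).Nonempty :=
    ⟨T, Finset.mem_filter.2 ⟨Finset.mem_powerset.2 (Finset.subset_univ T), hT⟩⟩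
  obtain ⟨S, hS, hc⟩ := Finset.exists_mem_eq_sup _ hne Finset.card
  exact ⟨S, (Finset.mem_filter.1 hS).2, hc.symm⟩

end aux2

section joinsec
variable {α β : Type*} [Fintype α] [Fintype β] (G : SimpleGraph α) (H : SimpleGraph β)

lemma sum_decomp (S : Finset (β ⊕ α)) :
    S = (Finset.univ.filter (fun b : β => Sum.inl b ∈ S)).image Sum.inl ∪
        (Finset.univ.filter (fun c : α => Sum.inr c ∈ S)).image Sum.inr := by
  ext x; cases x <;> simp

lemma card_union_images (A : Finset β) (B : Finset α) :
    (A.image Sum.inl ∪ B.image (Sum.inr : α → β ⊕ α)).card = A.card + B.card := by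
  rw [Finset.card_union_of_disjoint, Finset.card_image_of_injective _ Sum.inl_injective,
    Finset.card_image_of_injective _ Sum.inr_injective]
  simp [Finset.disjoint_left]

lemma indepNumOn_join (A : Finset β) (B : Finset α) :
    indepNumOn (joinG H G) (A.image Sum.inl ∪ B.image Sum.inr)
      = max (indepNumOn H A) (indepNumOn G B) := by
  apply le_antisymm
  · obtain ⟨s, hsub, hind, hcs⟩ :=
      exists_indep_eq (joinG H G) (A.image Sum.inl ∪ B.image Sum.inr)
    rw [← hcs]
    by_cases hc : ∃ b : β, Sum.inl b ∈ s
    · -- all elements of s are inl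
      obtain ⟨b₀, hb₀⟩ := hc
      have hall : ∀ x ∈ s, ∃ b : β, x = Sum.inl b := by
        rintro (b | c) hx
        · exact ⟨b, rfl⟩
        · exfalso
          exact hind _ hb₀ _ hx (by simp) trivial
      set t : Finset β := Finset.univ.filter (fun b : β => Sum.inl b ∈ s) with ht
      have hst : s = t.image Sum.inl := by
        ext x
        constructor
        · intro hx
          obtain ⟨b, rfl⟩ := hall x hx
          simp [ht, hx]
        · intro hx
          simp only [ht, Finset.mem_image, Finset.mem_filter, Finset.mem_univ, true_and] at hx
          obtain ⟨b, hb, rfl⟩ := hx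
          exact hb
      have htA : t ⊆ A := by
        intro b hb
        simp only [ht, Finset.mem_filter, Finset.mem_univ, true_and] at hb
        have := hsub hb
        simp only [Finset.mem_union, Finset.mem_image] at this
        rcases this with ⟨b', hb', he⟩ | ⟨c, hc, he⟩
        · rwa [← Sum.inl_injective he]
        · exact absurd he (by simp)
      have htind : ∀ x ∈ t, ∀ y ∈ t, x ≠ y → ¬ H.Adj x y := by
        intro x hx y hy hxy hadj
        simp only [ht, Finset.mem_filter, Finset.mem_univ, true_and] at hx hy
        exact hind _ hx _ hy (by simpa using hxy) hadj
      calc s.card = t.card := by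
            rw [hst, Finset.card_image_of_injective _ Sum.inl_injective]
        _ ≤ indepNumOn H A := card_le_indepNumOn H htA htind
        _ ≤ _ := le_max_left _ _
    · -- all elements of s are inr
      push_neg at hc
      set t : Finset α := Finset.univ.filter (fun c : α => Sum.inr c ∈ s) with ht
      have hst : s = t.image Sum.inr := by
        ext x
        constructor
        · intro hx
          rcases x with b | c
          · exact absurd hx (hc b)
          · simp [ht, hx]
        · intro hx
          simp only [ht, Finset.mem_image, Finset.mem_filter, Finset.mem_univ, true_and] at hx
          obtain ⟨c, hcc, rfl⟩ := hx
          exact hcc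
      have htB : t ⊆ B := by
        intro c hcm
        simp only [ht, Finset.mem_filter, Finset.mem_univ, true_and] at hcm
        have := hsub hcm
        simp only [Finset.mem_union, Finset.mem_image] at this
        rcases this with ⟨b', hb', he⟩ | ⟨c', hc', he⟩
        · exact absurd he (by simp)
        · rwa [← Sum.inr_injective he]
      have htind : ∀ x ∈ t, ∀ y ∈ t, x ≠ y → ¬ G.Adj x y := by
        intro x hx y hy hxy hadj
        simp only [ht, Finset.mem_filter, Finset.mem_univ, true_and] at hx hy
        exact hind _ hx _ hy (by simpa using hxy) hadj
      calc s.card = t.card := by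
            rw [hst, Finset.card_image_of_injective _ Sum.inr_injective]
        _ ≤ indepNumOn G B := card_le_indepNumOn G htB htind
        _ ≤ _ := le_max_right _ _
  · apply max_le
    · obtain ⟨s, hsA, hind, hc⟩ := exists_indep_eq H A
      rw [← hc]
      have : (s.image (Sum.inl : β → β ⊕ α)).card = s.card :=
        Finset.card_image_of_injective _ Sum.inl_injective
      rw [← this]
      apply card_le_indepNumOn
      · exact (Finset.image_subset_image hsA).trans Finset.subset_union_left
      · intro x hx y hy hxy hadj
        simp only [Finset.mem_image] at hx hy
        obtain ⟨u, hu, rfl⟩ := hx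
        obtain ⟨v, hv, rfl⟩ := hy
        exact hind u hu v hv (by simpa using hxy) hadj
    · obtain ⟨s, hsB, hind, hc⟩ := exists_indep_eq G B
      rw [← hc]
      have : (s.image (Sum.inr : α → β ⊕ α)).card = s.card :=
        Finset.card_image_of_injective _ Sum.inr_injective
      rw [← this]
      apply card_le_indepNumOn
      · exact (Finset.image_subset_image hsB).trans Finset.subset_union_right
      · intro x hx y hy hxy hadj
        simp only [Finset.mem_image] at hx hy
        obtain ⟨u, hu, rfl⟩ := hx
        obtain ⟨v, hv, rfl⟩ := hy
        exact hind u hu v hv (by simpa using hxy) hadj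

end joinsec

lemma le_wfun (G : SimpleGraph V) [Fintype V] {a : ℕ} {S : Finset V}
    (h : indepNumOn G S = a) : S.card ≤ wfun G a :=
  Finset.le_sup (Finset.mem_filter.2 ⟨Finset.mem_powerset.2 (Finset.subset_univ S), h⟩)

lemma wfun_le (G : SimpleGraph V) [Fintype V] {a n : ℕ}
    (h : ∀ S : Finset V, indepNumOn G S = a → S.card ≤ n) : wfun G a ≤ n :=
  Finset.sup_le fun S hS => h S (Finset.mem_filter.1 hS).2

/-- the w-function of the join H ∨ G. -/
theorem stmt_5 {α β : Type*} [Fintype α] [Fintype β]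
    (G : SimpleGraph α) (H : SimpleGraph β)
    (hind : indepNum H ≤ indepNum G)
    (a : ℕ) (ha : a ∈ Finset.Icc 1 (indepNum G)) :
    (a ≤ indepNum H → wfun (joinG H G) a = wfun H a + wfun G a) ∧
    (indepNum H ≤ a → wfun (joinG H G) a = Fintype.card β + wfun G a) := by
  rw [Finset.mem_Icc] at ha
  have haG : a ≤ indepNum G := ha.2
  have key : ∀ S : Finset (β ⊕ α), indepNumOn (joinG H G) S = a →
      ∃ (L : Finset β) (R : Finset α), S.card = L.card + R.card ∧
        indepNumOn H L ≤ a ∧ indepNumOn G R ≤ a := by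
    intro S hS
    set L := Finset.univ.filter (fun b : β => Sum.inl b ∈ S) with hL
    set R := Finset.univ.filter (fun c : α => Sum.inr c ∈ S) with hR
    have hd : S = L.image Sum.inl ∪ R.image Sum.inr := sum_decomp S
    have h2 : max (indepNumOn H L) (indepNumOn G R) = a := by
      rw [← indepNumOn_join G H L R, ← hd]; exact hS
    exact ⟨L, R, by rw [hd, card_union_images],
      h2 ▸ le_max_left _ _, h2 ▸ le_max_right _ _⟩
  have lb : ∀ (A : Finset β) (B : Finset α),
      max (indepNumOn H A) (indepNumOn G B) = a →
      A.card + B.card ≤ wfun (joinG H G) a := by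
    intro A B hmax
    rw [← card_union_images A B]
    exact le_wfun (joinG H G) (by rw [indepNumOn_join]; exact hmax)
  constructor
  · intro haH
    apply le_antisymm
    · apply wfun_le
      intro S hS
      obtain ⟨L, R, hcard, hL, hR⟩ := key S hS
      rw [hcard]
      exact Nat.add_le_add (card_le_wfun H haH hL) (card_le_wfun G haG hR)
    · obtain ⟨SH, hSH, hSHc⟩ := exists_wfun H haH
      obtain ⟨SG, hSG, hSGc⟩ := exists_wfun G haG
      rw [← hSHc, ← hSGc]
      exact lb SH SG (by rw [hSH, hSG, max_self])
  · intro haH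
    apply le_antisymm
    · apply wfun_le
      intro S hS
      obtain ⟨L, R, hcard, hL, hR⟩ := key S hS
      rw [hcard]
      refine Nat.add_le_add ?_ (card_le_wfun G haG hR)
      calc L.card ≤ Finset.univ.card := Finset.card_le_univ L
        _ = Fintype.card β := Finset.card_univ
    · obtain ⟨SG, hSG, hSGc⟩ := exists_wfun G haG
      have := lb Finset.univ SG (by
        rw [hSG]
        have h1 : indepNumOn H Finset.univ = indepNum H := rfl
        rw [h1, max_eq_right haH])
      rwa [Finset.card_univ, hSGc] at this
end

section
/- Let k ≥ 2 and let D be a positive integer with D ≤ 3k. Then ⌈(k/(3k+1))·D⌉ = ⌈D/3⌉. -/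
open Classical Finset

variable {V : Type*}

/-- for k ≥ 2 and 0 < D ≤ 3k, ⌈(k/(3k+1))·D⌉ = ⌈D/3⌉. -/
theorem stmt_11 (k D : ℕ) (hk : 2 ≤ k) (hD : 1 ≤ D) (hD3k : D ≤ 3 * k) :
    ⌈((k : ℚ) / (3 * (k : ℚ) + 1)) * (D : ℚ)⌉ = ⌈(D : ℚ) / 3⌉ := by
  set n : ℤ := ((D : ℤ) + 2) / 3 with hn
  have h1 : 3 * n ≤ (D : ℤ) + 2 := by omega
  have h2 : (D : ℤ) ≤ 3 * n := by omega
  have h3 : n ≤ (k : ℤ) := by omega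
  have hk0 : (0:ℚ) < 3 * (k:ℚ) + 1 := by positivity
  have hstep : ⌈(D : ℚ) / 3⌉ = n := by
    rw [Int.ceil_eq_iff]
    constructor
    · rw [lt_div_iff₀ (by norm_num : (0:ℚ) < 3)]
      push_cast
      have : ((D:ℤ):ℚ) + 2 - 3 * ((n:ℤ):ℚ) ≥ 0 := by exact_mod_cast sub_nonneg.mpr (by exact_mod_cast h1)
      push_cast at this; linarith
    · rw [div_le_iff₀ (by norm_num : (0:ℚ) < 3)]
      exact_mod_cast (by linarith : (D:ℤ) ≤ n * 3)
  rw [hstep, Int.ceil_eq_iff]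
  constructor
  · rw [div_mul_eq_mul_div, lt_div_iff₀ hk0]
    have key : (3*(k:ℤ)+1) * (n - 1) < k * D := by nlinarith
    push_cast
    have := (@Int.cast_lt ℚ _ _ _).mpr key
    push_cast at this; linarith
  · rw [div_mul_eq_mul_div, div_le_iff₀ hk0]
    have key : (k:ℤ) * D ≤ n * (3*k+1) := by nlinarith
    have := (@Int.cast_le ℚ _ _ _).mpr key
    push_cast at this; push_cast; linarith
end

section
/- Let G be a finite simple graph and suppose there exists S ⊆ V(G) with |S| = ω(G) + 1 such that no proper χ(G)-coloring of G assigns the same color to two distinct vertices of S. Let k = χ(G), let p be large enough that ρ(K_p ∨ G) = ω(G) + p, and let H = K_p ∨ G. Then there is a (p+k)-list-assignment L for H (namely L(v) = [p+k] for all v) and a request r asking color 1 at every vertex of W ∪ S (where W is the vertex set of the copy of K_p) such that no proper L-coloring of H colors at least ⌈|W ∪ S|/ρ(H)⌉ = 2 of the vertices in W ∪ S with color 1. Consequently χ_{ℓflex}(H) > χ(H) = p + k. -/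
open Classical Finset

variable {V : Type*}

/-- if no proper χ(G)-coloring repeats a color on S (|S| = ω(G)+1), then
for the constant (p+k)-assignment L ≡ [p+k] and the constant request of color 1 on W ∪ S,
no proper L-coloring satisfies 2 of the requests; consequently K_p ∨ G is not
(p+k, 1/ρ)-flexible, i.e. χ_{ℓflex}(K_p ∨ G) > p + k = χ(K_p ∨ G). -/
theorem stmt_14 {V : Type*} [Fintype V] (G : SimpleGraph V) (k p : ℕ)
    (hk : chromNum G = k) (hp : 1 ≤ p)
    (S : Finset V) (hScard : S.card = cliqueNum G + 1)
    (hS : ∀ c : V → ℕ, (∀ v, c v < k) → (∀ u v, G.Adj u v → c u ≠ c v) →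
      ∀ u ∈ S, ∀ v ∈ S, u ≠ v → c u ≠ c v)
    (hρ : hallRatio (joinG (⊤ : SimpleGraph (Fin p)) G)
      = (cliqueNum G : ℚ) + (p : ℚ)) :
    (¬ ∃ c : Fin p ⊕ V → ℕ,
        (∀ x, c x ∈ Finset.Icc 1 (p + k)) ∧
        (∀ x y, (joinG (⊤ : SimpleGraph (Fin p)) G).Adj x y → c x ≠ c y) ∧
        2 ≤ ((((Finset.univ : Finset (Fin p)).image Sum.inl ∪ S.image Sum.inr).filter
              (fun x => c x = 1)).card)) ∧
    ¬ FlexSat (joinG (⊤ : SimpleGraph (Fin p)) G) (p + k)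
        (1 / hallRatio (joinG (⊤ : SimpleGraph (Fin p)) G)) := by
  classical
  have key : ¬ ∃ c : Fin p ⊕ V → ℕ,
      (∀ x, c x ∈ Finset.Icc 1 (p + k)) ∧
      (∀ x y, (joinG (⊤ : SimpleGraph (Fin p)) G).Adj x y → c x ≠ c y) ∧
      2 ≤ ((((Finset.univ : Finset (Fin p)).image Sum.inl ∪ S.image Sum.inr).filter
            (fun x => c x = 1)).card) := by
    rintro ⟨c, hcL, hcP, hc2⟩
    obtain ⟨x, hx, y, hy, hxy⟩ := Finset.one_lt_card.mp hc2
    simp only [Finset.mem_filter] at hx hy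
    obtain ⟨hxD, hx1⟩ := hx
    obtain ⟨hyD, hy1⟩ := hy
    have hcxy : c x = c y := by rw [hx1, hy1]
    -- any two distinct elements with equal colors must both be inr with endpoints in S
    have adjIl : ∀ (i : Fin p) (v : V),
        (joinG (⊤ : SimpleGraph (Fin p)) G).Adj (Sum.inl i) (Sum.inr v) := by
      intro i v; exact trivial
    obtain ⟨u, v, huS, hvS, huv, hxu, hyv⟩ :
        ∃ u v, u ∈ S ∧ v ∈ S ∧ u ≠ v ∧ x = Sum.inr u ∧ y = Sum.inr v := by
      match x, y with
      | Sum.inl i, Sum.inl j =>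
        exact absurd hcxy (hcP _ _ (by
          have : i ≠ j := fun h => hxy (by rw [h])
          exact this))
      | Sum.inl i, Sum.inr v => exact absurd hcxy (hcP _ _ (adjIl i v))
      | Sum.inr u, Sum.inl j => exact absurd hcxy.symm (hcP _ _ (adjIl j u))
      | Sum.inr u, Sum.inr v =>
        have huS : u ∈ S := by
          rcases Finset.mem_union.mp hxD with h | h
          · obtain ⟨i, -, hi⟩ := Finset.mem_image.mp h; exact absurd hi (by simp)
          · obtain ⟨w, hw, hwe⟩ := Finset.mem_image.mp h
            exact Sum.inr_injective hwe ▸ hw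
        have hvS : v ∈ S := by
          rcases Finset.mem_union.mp hyD with h | h
          · obtain ⟨i, -, hi⟩ := Finset.mem_image.mp h; exact absurd hi (by simp)
          · obtain ⟨w, hw, hwe⟩ := Finset.mem_image.mp h
            exact Sum.inr_injective hwe ▸ hw
        exact ⟨u, v, huS, hvS, fun h => hxy (by rw [h]), rfl, rfl⟩
    -- build a k-coloring of G
    set WC : Finset ℕ := Finset.univ.image (fun i : Fin p => c (Sum.inl i)) with hWC
    have hWCcard : WC.card = p := by
      rw [Finset.card_image_of_injective _ (fun i j h => by
        by_contra hne; exact hcP (Sum.inl i) (Sum.inl j) hne h), Finset.card_univ,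
        Fintype.card_fin]
    have hWCsub : WC ⊆ Finset.Icc 1 (p + k) := by
      intro a ha
      obtain ⟨i, -, hi⟩ := Finset.mem_image.mp ha
      exact hi ▸ hcL (Sum.inl i)
    set A : Finset ℕ := Finset.Icc 1 (p + k) \ WC with hAdef
    have hA : A.card = k := by
      rw [hAdef, Finset.card_sdiff_of_subset hWCsub, Nat.card_Icc, hWCcard]; omega
    have hmem : ∀ w : V, c (Sum.inr w) ∈ A := by
      intro w
      rw [hAdef, Finset.mem_sdiff]
      refine ⟨hcL _, fun h => ?_⟩
      obtain ⟨i, -, hi⟩ := Finset.mem_image.mp h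
      exact hcP (Sum.inl i) (Sum.inr w) (adjIl i w) hi
    set e := A.orderIsoOfFin hA with he
    set c' : V → ℕ := fun w => (e.symm ⟨c (Sum.inr w), hmem w⟩ : Fin k) with hc'
    have hinj : ∀ a b : V, c' a = c' b → c (Sum.inr a) = c (Sum.inr b) := by
      intro a b hab
      have : e.symm ⟨c (Sum.inr a), hmem a⟩ = e.symm ⟨c (Sum.inr b), hmem b⟩ :=
        Fin.val_injective hab
      have := e.symm.injective this
      exact congrArg Subtype.val this
    have hc'lt : ∀ w, c' w < k := fun w => (e.symm ⟨c (Sum.inr w), hmem w⟩).isLt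
    have hc'proper : ∀ a b, G.Adj a b → c' a ≠ c' b := by
      intro a b hab h
      exact hcP (Sum.inr a) (Sum.inr b) hab (hinj a b h)
    refine hS c' hc'lt hc'proper u huS v hvS huv ?_
    have : c (Sum.inr u) = c (Sum.inr v) := by rw [← hxu, ← hyv, hx1, hy1]
    simp only [hc', this]
  refine ⟨key, fun hF => ?_⟩
  set D : Finset (Fin p ⊕ V) :=
    (Finset.univ : Finset (Fin p)).image Sum.inl ∪ S.image Sum.inr with hD
  have hDcard : D.card = cliqueNum G + p + 1 := by
    rw [hD, Finset.card_union_of_disjoint, Finset.card_image_of_injective _ Sum.inl_injective,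
      Finset.card_image_of_injective _ Sum.inr_injective, Finset.card_univ, Fintype.card_fin,
      hScard]
    · omega
    · rw [Finset.disjoint_left]
      intro a ha hb
      obtain ⟨i, -, hi⟩ := Finset.mem_image.mp ha
      obtain ⟨w, -, hw⟩ := Finset.mem_image.mp hb
      rw [← hi] at hw; exact Sum.inr_ne_inl hw
  have hDne : D.Nonempty := by
    refine ⟨Sum.inl ⟨0, hp⟩, ?_⟩
    exact Finset.mem_union_left _ (Finset.mem_image_of_mem _ (Finset.mem_univ _))
  have h1mem : (1 : ℕ) ∈ Finset.Icc 1 (p + k) := by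
    rw [Finset.mem_Icc]; omega
  obtain ⟨c, hcL, hcP, hsat⟩ := hF (fun _ => Finset.Icc 1 (p + k))
    (fun _ => by rw [Nat.card_Icc]; omega) D hDne (fun _ => 1) (fun _ _ => h1mem)
  apply key
  refine ⟨c, hcL, hcP, ?_⟩
  rw [hρ] at hsat
  rw [hDcard] at hsat
  set N := ((D.filter (fun x => c x = 1)).card)
  have hpos : (0 : ℚ) < (cliqueNum G : ℚ) + (p : ℚ) := by
    have : (0 : ℚ) < (p : ℚ) := by exact_mod_cast hp
    positivity
  have h1 : (1 : ℚ) < (N : ℚ) := by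
    have : (1 : ℚ) < 1 / ((cliqueNum G : ℚ) + (p : ℚ)) * ((cliqueNum G + p + 1 : ℕ) : ℚ) := by
      rw [one_div, inv_mul_eq_div, lt_div_iff₀ hpos]
      push_cast
      linarith
    exact lt_of_lt_of_le this hsat
  have : 1 < N := by exact_mod_cast h1
  omega
end

section
/- Let a, b, k be positive integers with k ≥ b/a, and let G be a finite simple graph such that for every k-list-assignment L of G and every request r of L with domain D, some proper L-coloring of G satisfies at least (a/b)|D| of the requests. Then in the cone G' = K_1 ∨ G, for every (k+1)-list-assignment L' of G' and every request r' of L' with domain D', some proper L'-coloring of G' satisfies at least (a/(a+b))|D'| of the requests. In other words, ε_ℓ(G,k) ≥ a/b implies ε_ℓ(K_1 ∨ G, k+1) ≥ a/(a+b). -/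
open Classical Finset

variable {V : Type*}

/-! ### Auxiliary lemmas for `stmt_19` -/

/-- Counting satisfied requests in the join from those in the base graph plus the apex. -/
lemma satCount_aux {V : Type*} (D' : Finset (Fin 1 ⊕ V)) (D₀ : Finset V)
    (c r' : Fin 1 ⊕ V → ℕ) (hD₀ : ∀ v ∈ D₀, Sum.inr v ∈ D') :
    (D₀.filter (fun v => c (Sum.inr v) = r' (Sum.inr v))).card +
      (if Sum.inl 0 ∈ D' ∧ c (Sum.inl 0) = r' (Sum.inl 0) then 1 else 0) ≤
    (D'.filter (fun x => c x = r' x)).card := by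
  classical
  set S := (D₀.filter (fun v => c (Sum.inr v) = r' (Sum.inr v))).image (Sum.inr : V → Fin 1 ⊕ V) with hS
  have hSsub : S ⊆ D'.filter (fun x => c x = r' x) := by
    intro x hx
    simp only [hS, Finset.mem_image] at hx
    obtain ⟨v, hv, rfl⟩ := hx
    rw [Finset.mem_filter] at hv ⊢
    exact ⟨hD₀ v hv.1, hv.2⟩
  have hScard : S.card = (D₀.filter (fun v => c (Sum.inr v) = r' (Sum.inr v))).card :=
    Finset.card_image_of_injective _ Sum.inr_injective
  by_cases h : Sum.inl 0 ∈ D' ∧ c (Sum.inl 0) = r' (Sum.inl 0)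
  · rw [if_pos h]
    have hu : (Sum.inl 0 : Fin 1 ⊕ V) ∉ S := by simp [hS]
    have hins : insert (Sum.inl (0 : Fin 1)) S ⊆ D'.filter (fun x => c x = r' x) := by
      intro x hx
      rcases Finset.mem_insert.mp hx with rfl | hx
      · rw [Finset.mem_filter]; exact h
      · exact hSsub hx
    have := Finset.card_le_card hins
    rw [Finset.card_insert_of_notMem hu, hScard] at this
    omega
  · rw [if_neg h]
    have := Finset.card_le_card hSsub
    rw [hScard] at this
    omega

/-- There is a color in `t` whose fiber in `s` has size at most `|s|/|t|`. -/
lemma fiberMin_aux {V : Type*} (s : Finset V) (f : V → ℕ) (t : Finset ℕ) (ht : t.Nonempty) :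
    ∃ α ∈ t, t.card * (s.filter (fun v => f v = α)).card ≤ s.card := by
  classical
  obtain ⟨α, hαt, hmin⟩ :=
    Finset.exists_min_image t (fun β => (s.filter (fun v => f v = β)).card) ht
  refine ⟨α, hαt, ?_⟩
  have hsum : ∑ β ∈ t, (s.filter (fun v => f v = β)).card ≤ s.card := by
    have h1 : (s.filter (fun v => f v ∈ t)).card =
        ∑ β ∈ t, ((s.filter (fun v => f v ∈ t)).filter (fun v => f v = β)).card :=
      Finset.card_eq_sum_card_fiberwise (fun x hx => (Finset.mem_filter.mp hx).2)
    have h2 : ∀ β ∈ t, ((s.filter (fun v => f v ∈ t)).filter (fun v => f v = β)) =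
        s.filter (fun v => f v = β) := by
      intro β hβ
      rw [Finset.filter_filter]
      refine Finset.filter_congr fun v _ => ?_
      constructor
      · rintro ⟨_, h⟩; exact h
      · intro h; exact ⟨h ▸ hβ, h⟩
    calc ∑ β ∈ t, (s.filter (fun v => f v = β)).card
        = ∑ β ∈ t, ((s.filter (fun v => f v ∈ t)).filter (fun v => f v = β)).card :=
          Finset.sum_congr rfl fun β hβ => by rw [h2 β hβ]
      _ = (s.filter (fun v => f v ∈ t)).card := h1.symm
      _ ≤ s.card := Finset.card_filter_le _ _
  have hle : t.card * (s.filter (fun v => f v = α)).card ≤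
      ∑ β ∈ t, (s.filter (fun v => f v = β)).card := by
    have := Finset.card_nsmul_le_sum t (fun β => (s.filter (fun v => f v = β)).card) _
      (fun β hβ => hmin β hβ)
    simpa [smul_eq_mul] using this
  omega

/-- Core construction: color the apex with `α`, delete `α` from the lists in `G`, and apply
flexibility of `G` on the set `D₀` of requested vertices whose request differs from `α`. -/
lemma key_aux {V : Type*} [Fintype V] (G : SimpleGraph V) (a b k : ℕ)
    (hk1 : 1 ≤ k) (hG : FlexSat G k ((a : ℚ) / (b : ℚ)))
    (L' : Fin 1 ⊕ V → Finset ℕ) (hL' : ∀ v, (L' v).card = k + 1)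
    (r' : Fin 1 ⊕ V → ℕ) (α : ℕ) (hα : α ∈ L' (Sum.inl 0)) (D₀ : Finset V)
    (hD₀ : ∀ v ∈ D₀, r' (Sum.inr v) ∈ L' (Sum.inr v) ∧ r' (Sum.inr v) ≠ α) :
    ∃ c : Fin 1 ⊕ V → ℕ, c (Sum.inl 0) = α ∧
      (∀ x, c x ∈ L' x) ∧
      (∀ x y, (joinG (⊤ : SimpleGraph (Fin 1)) G).Adj x y → c x ≠ c y) ∧
      ((a : ℚ) / b) * D₀.card ≤
        ((D₀.filter (fun v => c (Sum.inr v) = r' (Sum.inr v))).card : ℚ) := by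
  classical
  have hpick : ∀ v : V, ∃ Lv : Finset ℕ,
      ((L' (Sum.inr v)).erase α ∩ {r' (Sum.inr v)}) ⊆ Lv ∧
      Lv ⊆ (L' (Sum.inr v)).erase α ∧ Lv.card = k := by
    intro v
    refine Finset.exists_subsuperset_card_eq Finset.inter_subset_left ?_ ?_
    · calc ((L' (Sum.inr v)).erase α ∩ {r' (Sum.inr v)}).card
          ≤ ({r' (Sum.inr v)} : Finset ℕ).card :=
            Finset.card_le_card Finset.inter_subset_right
        _ = 1 := Finset.card_singleton _
        _ ≤ k := hk1
    · have := Finset.pred_card_le_card_erase (s := L' (Sum.inr v)) (a := α)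
      rw [hL'] at this
      omega
  choose L hL1 hL2 hL3 using hpick
  have hcG : ∃ cG : V → ℕ, (∀ v, cG v ∈ L v) ∧ (∀ x y, G.Adj x y → cG x ≠ cG y) ∧
      ((a : ℚ) / b) * D₀.card ≤
        ((D₀.filter (fun v => cG v = r' (Sum.inr v))).card : ℚ) := by
    rcases D₀.eq_empty_or_nonempty with hD | hD
    · subst hD
      simp only [Finset.filter_empty, Finset.card_empty, Nat.cast_zero, mul_zero, le_refl,
        and_true]
      rcases isEmpty_or_nonempty V with hV | hV
      · exact ⟨fun _ => 0, fun v => isEmptyElim v, fun x y h => isEmptyElim x⟩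
      · obtain ⟨c, hc1, hc2, -⟩ := hG L hL3 {Classical.arbitrary V}
          (Finset.singleton_nonempty _)
          (fun v => if h : (L v).Nonempty then h.choose else 0)
          (fun v _ => by
            have hne : (L v).Nonempty := Finset.card_pos.mp (by rw [hL3]; omega)
            simp only [dif_pos hne]
            exact hne.choose_spec)
        exact ⟨c, hc1, hc2⟩
    · obtain ⟨c, hc1, hc2, hc3⟩ := hG L hL3 D₀ hD (fun v => r' (Sum.inr v))
        (fun v hv => hL1 v (Finset.mem_inter.mpr
          ⟨Finset.mem_erase.mpr ⟨(hD₀ v hv).2, (hD₀ v hv).1⟩, Finset.mem_singleton_self _⟩))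
      exact ⟨c, hc1, hc2, hc3⟩
  obtain ⟨cG, hcG1, hcG2, hcG3⟩ := hcG
  refine ⟨Sum.elim (fun _ => α) cG, rfl, ?_, ?_, ?_⟩
  · rintro (i | v)
    · have : i = (0 : Fin 1) := Subsingleton.elim _ _
      subst this
      exact hα
    · exact Finset.mem_of_mem_erase (hL2 v (hcG1 v))
  · rintro (i | x) (j | y) hadj
    · have hij : (⊤ : SimpleGraph (Fin 1)).Adj i j := hadj
      exact absurd (Subsingleton.elim i j) hij.ne
    · simp only [Sum.elim_inl, Sum.elim_inr]
      intro h
      exact (Finset.mem_erase.mp (hL2 y (hcG1 y))).1 h.symm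
    · simp only [Sum.elim_inl, Sum.elim_inr]
      intro h
      exact (Finset.mem_erase.mp (hL2 x (hcG1 x))).1 h
    · have hxy : G.Adj x y := hadj
      exact hcG2 x y hxy
  · convert hcG3 using 4 <;> simp

/-- Arithmetic for the "don't satisfy the apex" option when the direct option fails. -/
lemma arith2_aux (A B K dq M M' : ℚ) (hA : 1 ≤ A) (hB : 1 ≤ B) (hK : 1 ≤ K)
    (hBK : B ≤ A * K) (hBd : B < A * dq) (hM'0 : 0 ≤ M')
    (hKM : K * M' ≤ dq - M)
    (hopt : 1 + (A / B) * (dq - M) < (A / (A + B)) * (dq + 1)) :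
    (A / (A + B)) * (dq + 1) ≤ (A / B) * (dq - M') := by
  have hA0 : (0 : ℚ) < A := by linarith
  have hB0 : (0 : ℚ) < B := by linarith
  have hAB0 : (0 : ℚ) < A + B := by linarith
  have hK0 : (0 : ℚ) < K := by linarith
  have h1 : 1 + (A / B) * (dq - M) = (B + A * (dq - M)) / B := by
    field_simp
  have h2 : (A / (A + B)) * (dq + 1) = A * (dq + 1) / (A + B) := by ring
  have h3 : (A / B) * (dq - M') = A * (dq - M') / B := by ring
  rw [h1, h2, div_lt_div_iff₀ hB0 hAB0] at hopt
  rw [h2, h3, div_le_div_iff₀ hAB0 hB0]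
  have e1 : A * (K * M') ≤ A * (dq - M) := mul_le_mul_of_nonneg_left hKM hA0.le
  have e4 : (K + 1) * (A * (dq + 1) * B) ≤ (A + B) * (B + A * K * dq) := by
    nlinarith [mul_nonneg (sub_nonneg.2 hBd.le) (sub_nonneg.2 hBK)]
  have e3 : (A + B) * (B + A * K * dq) ≤
      (A + B) * ((B + A * (dq - M)) + K * (A * (dq - M'))) := by
    apply mul_le_mul_of_nonneg_left _ hAB0.le
    nlinarith [e1]
  have e6 : K * (A * (dq + 1) * B) < K * ((A + B) * (A * (dq - M'))) := by
    nlinarith [e4, e3, hopt]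
  have e7 := lt_of_mul_lt_mul_left e6 hK0.le
  nlinarith [e7]
/-- Arithmetic for the case where the apex is not in the domain. -/
lemma arith1_aux (A B K dq M : ℚ) (hA : 1 ≤ A) (hB : 1 ≤ B)
    (hBK : B ≤ A * K) (hM0 : 0 ≤ M) (hmq : (K + 1) * M ≤ dq) :
    (A / (A + B)) * dq ≤ (A / B) * (dq - M) := by
  have hA0 : (0 : ℚ) < A := by linarith
  have hB0 : (0 : ℚ) < B := by linarith
  have hAB0 : (0 : ℚ) < A + B := by linarith
  rw [div_mul_eq_mul_div, div_mul_eq_mul_div, div_le_div_iff₀ hAB0 hB0]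
  have t1 : A * (A * ((K + 1) * M)) ≤ A * (A * dq) :=
    mul_le_mul_of_nonneg_left (mul_le_mul_of_nonneg_left hmq hA0.le) hA0.le
  have t2 : (0 : ℚ) ≤ A * ((A * K - B) * M) :=
    mul_nonneg hA0.le (mul_nonneg (sub_nonneg.2 hBK) hM0)
  nlinarith [t1, t2]

/-- ε_ℓ(G,k) ≥ a/b (with k ≥ b/a) implies ε_ℓ(K_1 ∨ G, k+1) ≥ a/(a+b). -/
theorem stmt_19 {V : Type*} [Fintype V] (G : SimpleGraph V) (a b k : ℕ)
    (ha : 1 ≤ a) (hb : 1 ≤ b) (hk : (b : ℚ) / (a : ℚ) ≤ (k : ℚ))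
    (hG : FlexSat G k ((a : ℚ) / (b : ℚ))) :
    FlexSat (joinG (⊤ : SimpleGraph (Fin 1)) G) (k + 1)
      ((a : ℚ) / ((a : ℚ) + (b : ℚ))) := by
  classical
  intro L' hL' D' hD'ne r' hr'
  have hA1 : (1 : ℚ) ≤ a := by exact_mod_cast ha
  have hB1 : (1 : ℚ) ≤ b := by exact_mod_cast hb
  have hA0 : (0 : ℚ) < a := by linarith
  have hB0 : (0 : ℚ) < b := by linarith
  have hAB0 : (0 : ℚ) < (a : ℚ) + b := by linarith
  have hBK : (b : ℚ) ≤ (a : ℚ) * k := by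
    rw [div_le_iff₀ hA0] at hk
    linarith
  have hk1 : 1 ≤ k := by
    by_contra h
    push_neg at h
    interval_cases k
    simp at hBK
    linarith
  have hK1 : (1 : ℚ) ≤ (k : ℚ) := by exact_mod_cast hk1
  set Dg : Finset V := Finset.univ.filter (fun v => Sum.inr v ∈ D') with hDgdef
  have hDgmem : ∀ v ∈ Dg, Sum.inr v ∈ D' := fun v hv => (Finset.mem_filter.mp hv).2
  have hcardN : D'.card = Dg.card + (if Sum.inl 0 ∈ D' then 1 else 0) := by
    have hsplit : D' = (Dg.image Sum.inr) ∪ D'.filter (fun x => x = Sum.inl 0) := by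
      ext x
      rcases x with i | v
      · have : i = (0 : Fin 1) := Subsingleton.elim _ _
        subst this
        simp [hDgdef]
      · simp [hDgdef]
    have hdisj : Disjoint (Dg.image Sum.inr) (D'.filter (fun x => x = Sum.inl 0)) := by
      rw [Finset.disjoint_left]
      rintro x hx hx'
      obtain ⟨v, -, rfl⟩ := Finset.mem_image.mp hx
      exact absurd (Finset.mem_filter.mp hx').2 (by simp)
    conv_lhs => rw [hsplit]
    rw [Finset.card_union_of_disjoint hdisj,
      Finset.card_image_of_injective _ Sum.inr_injective, Finset.filter_eq']
    split <;> simp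
  have hLu : (L' (Sum.inl 0)).card = k + 1 := hL' _
  by_cases huD : (Sum.inl 0 : Fin 1 ⊕ V) ∈ D'
  · -- the apex is in the domain
    have hd : ((D'.card : ℚ)) = (Dg.card : ℚ) + 1 := by
      rw [hcardN, if_pos huD]; push_cast; ring
    have hruL : r' (Sum.inl 0) ∈ L' (Sum.inl 0) := hr' _ huD
    set m := (Dg.filter (fun v => r' (Sum.inr v) = r' (Sum.inl 0))).card with hmdef
    have hfc1 : m + (Dg.filter (fun v => ¬ r' (Sum.inr v) = r' (Sum.inl 0))).card = Dg.card :=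
      Finset.card_filter_add_card_filter_not _
    by_cases hopt : ((a : ℚ) / ((a : ℚ) + b)) * ((Dg.card : ℚ) + 1) ≤
        1 + ((a : ℚ) / b) * ((Dg.card : ℚ) - m)
    · -- satisfy the apex itself
      obtain ⟨c, hc0, hcL, hcp, hcb⟩ := key_aux G a b k hk1 hG L' hL' r' (r' (Sum.inl 0)) hruL
        (Dg.filter (fun v => ¬ r' (Sum.inr v) = r' (Sum.inl 0)))
        (fun v hv => ⟨hr' _ (hDgmem v (Finset.mem_filter.mp hv).1),
          (Finset.mem_filter.mp hv).2⟩)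
      refine ⟨c, hcL, hcp, ?_⟩
      have hsc := satCount_aux D' (Dg.filter (fun v => ¬ r' (Sum.inr v) = r' (Sum.inl 0))) c r'
        (fun v hv => hDgmem v (Finset.mem_filter.mp hv).1)
      rw [if_pos ⟨huD, hc0⟩] at hsc
      have hscq : ((Dg.filter (fun v => ¬ r' (Sum.inr v) = r' (Sum.inl 0))).filter
          (fun v => c (Sum.inr v) = r' (Sum.inr v))).card + (1 : ℚ) ≤
          ((D'.filter (fun x => c x = r' x)).card : ℚ) := by exact_mod_cast hsc
      have hD₀q : (((Dg.filter (fun v => ¬ r' (Sum.inr v) = r' (Sum.inl 0))).card : ℚ)) =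
          (Dg.card : ℚ) - m := by
        have : (m : ℚ) + ((Dg.filter (fun v => ¬ r' (Sum.inr v) = r' (Sum.inl 0))).card : ℚ)
            = (Dg.card : ℚ) := by exact_mod_cast hfc1
        linarith
      rw [hd]
      calc ((a : ℚ) / ((a : ℚ) + b)) * ((Dg.card : ℚ) + 1)
          ≤ 1 + ((a : ℚ) / b) * ((Dg.card : ℚ) - m) := hopt
        _ = 1 + ((a : ℚ) / b) *
            (((Dg.filter (fun v => ¬ r' (Sum.inr v) = r' (Sum.inl 0))).card : ℚ)) := by
            rw [hD₀q]
        _ ≤ ((D'.filter (fun x => c x = r' x)).card : ℚ) := by linarith [hcb, hscq]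
    · -- don't satisfy the apex: pick a good color avoiding r'(apex)
      push_neg at hopt
      have hbig : (b : ℚ) < (a : ℚ) * Dg.card := by
        by_contra hsmall
        push_neg at hsmall
        have h1 : ((a : ℚ) / ((a : ℚ) + b)) * ((Dg.card : ℚ) + 1) ≤ 1 := by
          rw [div_mul_eq_mul_div, div_le_one hAB0]
          linarith
        have h2 : (0 : ℚ) ≤ ((a : ℚ) / b) * ((Dg.card : ℚ) - m) := by
          apply mul_nonneg (by positivity)
          have hmle : m ≤ Dg.card := by omega
          have : (m : ℚ) ≤ (Dg.card : ℚ) := by exact_mod_cast hmle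
          linarith
        linarith
      have hek : ((L' (Sum.inl 0)).erase (r' (Sum.inl 0))).card = k := by
        rw [Finset.card_erase_of_mem hruL, hLu]
        omega
      obtain ⟨α, hαe, hαmin⟩ := fiberMin_aux
        (Dg.filter (fun v => ¬ r' (Sum.inr v) = r' (Sum.inl 0))) (fun v => r' (Sum.inr v))
        ((L' (Sum.inl 0)).erase (r' (Sum.inl 0)))
        (Finset.card_pos.mp (by rw [hek]; omega))
      have hαne : α ≠ r' (Sum.inl 0) := (Finset.mem_erase.mp hαe).1
      have hαL : α ∈ L' (Sum.inl 0) := (Finset.mem_erase.mp hαe).2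
      rw [hek] at hαmin
      have hfe : (Dg.filter (fun v => ¬ r' (Sum.inr v) = r' (Sum.inl 0))).filter
          (fun v => r' (Sum.inr v) = α) = Dg.filter (fun v => r' (Sum.inr v) = α) := by
        rw [Finset.filter_filter]
        refine Finset.filter_congr fun v _ => ?_
        constructor
        · rintro ⟨-, h⟩; exact h
        · intro h; exact ⟨fun h' => hαne (h ▸ h' ▸ rfl), h⟩
      rw [hfe] at hαmin
      set m' := (Dg.filter (fun v => r' (Sum.inr v) = α)).card with hm'def
      have hfc2 : m' + (Dg.filter (fun v => ¬ r' (Sum.inr v) = α)).card = Dg.card :=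
        Finset.card_filter_add_card_filter_not _
      obtain ⟨c, hc0, hcL, hcp, hcb⟩ := key_aux G a b k hk1 hG L' hL' r' α hαL
        (Dg.filter (fun v => ¬ r' (Sum.inr v) = α))
        (fun v hv => ⟨hr' _ (hDgmem v (Finset.mem_filter.mp hv).1),
          (Finset.mem_filter.mp hv).2⟩)
      refine ⟨c, hcL, hcp, ?_⟩
      have hsc := satCount_aux D' (Dg.filter (fun v => ¬ r' (Sum.inr v) = α)) c r'
        (fun v hv => hDgmem v (Finset.mem_filter.mp hv).1)
      have hscq : (((Dg.filter (fun v => ¬ r' (Sum.inr v) = α)).filter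
          (fun v => c (Sum.inr v) = r' (Sum.inr v))).card : ℚ) ≤
          ((D'.filter (fun x => c x = r' x)).card : ℚ) := by
        exact_mod_cast le_trans (Nat.le_add_right _ _) hsc
      have hD₀q : (((Dg.filter (fun v => ¬ r' (Sum.inr v) = α)).card : ℚ)) =
          (Dg.card : ℚ) - m' := by
        have : (m' : ℚ) + ((Dg.filter (fun v => ¬ r' (Sum.inr v) = α)).card : ℚ)
            = (Dg.card : ℚ) := by exact_mod_cast hfc2
        linarith
      have hKM : (k : ℚ) * (m' : ℚ) ≤ (Dg.card : ℚ) - (m : ℚ) := by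
        have h1 : ((k * m' : ℕ) : ℚ) ≤
            ((Dg.filter (fun v => ¬ r' (Sum.inr v) = r' (Sum.inl 0))).card : ℚ) := by
          exact_mod_cast hαmin
        have h2 : (m : ℚ) +
            ((Dg.filter (fun v => ¬ r' (Sum.inr v) = r' (Sum.inl 0))).card : ℚ)
            = (Dg.card : ℚ) := by exact_mod_cast hfc1
        push_cast at h1
        linarith
      have harith := arith2_aux (a : ℚ) (b : ℚ) (k : ℚ) (Dg.card : ℚ) (m : ℚ) (m' : ℚ)
        hA1 hB1 hK1 hBK hbig (Nat.cast_nonneg _) hKM hopt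
      rw [hd]
      calc ((a : ℚ) / ((a : ℚ) + b)) * ((Dg.card : ℚ) + 1)
          ≤ ((a : ℚ) / b) * ((Dg.card : ℚ) - m') := harith
        _ = ((a : ℚ) / b) * ((Dg.filter (fun v => ¬ r' (Sum.inr v) = α)).card : ℚ) := by
            rw [hD₀q]
        _ ≤ ((D'.filter (fun x => c x = r' x)).card : ℚ) := le_trans hcb hscq
  · -- the apex is not in the domain
    have hd : ((D'.card : ℚ)) = (Dg.card : ℚ) := by
      rw [hcardN, if_neg huD]; push_cast; ring
    obtain ⟨α, hαL, hαmin⟩ := fiberMin_aux Dg (fun v => r' (Sum.inr v)) (L' (Sum.inl 0))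
      (Finset.card_pos.mp (by rw [hLu]; omega))
    rw [hLu] at hαmin
    set m := (Dg.filter (fun v => r' (Sum.inr v) = α)).card with hmdef
    have hfc : m + (Dg.filter (fun v => ¬ r' (Sum.inr v) = α)).card = Dg.card :=
      Finset.card_filter_add_card_filter_not _
    obtain ⟨c, hc0, hcL, hcp, hcb⟩ := key_aux G a b k hk1 hG L' hL' r' α hαL
      (Dg.filter (fun v => ¬ r' (Sum.inr v) = α))
      (fun v hv => ⟨hr' _ (hDgmem v (Finset.mem_filter.mp hv).1),
        (Finset.mem_filter.mp hv).2⟩)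
    refine ⟨c, hcL, hcp, ?_⟩
    have hsc := satCount_aux D' (Dg.filter (fun v => ¬ r' (Sum.inr v) = α)) c r'
      (fun v hv => hDgmem v (Finset.mem_filter.mp hv).1)
    have hscq : (((Dg.filter (fun v => ¬ r' (Sum.inr v) = α)).filter
        (fun v => c (Sum.inr v) = r' (Sum.inr v))).card : ℚ) ≤
        ((D'.filter (fun x => c x = r' x)).card : ℚ) := by
      exact_mod_cast le_trans (Nat.le_add_right _ _) hsc
    have hD₀q : (((Dg.filter (fun v => ¬ r' (Sum.inr v) = α)).card : ℚ)) =
        (Dg.card : ℚ) - m := by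
      have : (m : ℚ) + ((Dg.filter (fun v => ¬ r' (Sum.inr v) = α)).card : ℚ)
          = (Dg.card : ℚ) := by exact_mod_cast hfc
      linarith
    have hmq : ((k : ℚ) + 1) * (m : ℚ) ≤ (Dg.card : ℚ) := by
      have : (((k + 1) * m : ℕ) : ℚ) ≤ (Dg.card : ℚ) := by exact_mod_cast hαmin
      push_cast at this
      linarith
    have hm0 : (0 : ℚ) ≤ (m : ℚ) := Nat.cast_nonneg _
    have key : ((a : ℚ) / ((a : ℚ) + b)) * (Dg.card : ℚ) ≤
        ((a : ℚ) / b) * ((Dg.card : ℚ) - m) :=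
      arith1_aux (a : ℚ) (b : ℚ) (k : ℚ) (Dg.card : ℚ) (m : ℚ) hA1 hB1 hBK hm0 hmq
    rw [hd]
    calc ((a : ℚ) / ((a : ℚ) + b)) * (Dg.card : ℚ)
        ≤ ((a : ℚ) / b) * ((Dg.card : ℚ) - m) := key
      _ = ((a : ℚ) / b) * ((Dg.filter (fun v => ¬ r' (Sum.inr v) = α)).card : ℚ) := by
          rw [hD₀q]
      _ ≤ ((D'.filter (fun x => c x = r' x)).card : ℚ) := le_trans hcb hscq
end
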